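/- arXiv:1102.1641 — 4 statements merged into one kernel-verified Lean document; each statement's English description precedes it below -/
import Mathlib

section
/- (Duality, case n = 1.) Let A, B, C be m×m complex matrices with B, C invertible, and let T(E) = [[B⁻¹(E·I − A), −B⁻¹C], [I, 0]]. Then for all z ≠ 0 and all E, det(T(E) − z·I) = (−z)^m · det(E·I − H(z)) / det B, where H(z) = A + B + z·B + C/z − B (i.e., H(z) = A + z B + C/z). -/
open Matrix

/-- Duality for `n = 1`: with `T(E) = [[B⁻¹(E·I − A), −B⁻¹C], [I, 0]]` and
`H(z) = A + z B + C/z`, for `z ≠ 0` one has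
`det(T(E) − z·I) = (−z)^m det(E·I − H(z)) / det B`. -/
theorem stmt_9 {m : ℕ} (A B C : Matrix (Fin m) (Fin m) ℂ)
    (hB : IsUnit B.det) (hC : IsUnit C.det) (E : ℂ) (z : ℂ) (hz : z ≠ 0) :
    (fromBlocks (B⁻¹ * (E • 1 - A)) (-(B⁻¹ * C)) 1 0
        - z • (1 : Matrix (Fin m ⊕ Fin m) (Fin m ⊕ Fin m) ℂ)).det =
      (-z) ^ m * (E • (1 : Matrix (Fin m) (Fin m) ℂ) - (A + z • B + z⁻¹ • C)).det
        / B.det := by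
  have h1 : (z • (1 : Matrix (Fin m ⊕ Fin m) (Fin m ⊕ Fin m) ℂ))
      = fromBlocks (z • 1) 0 0 (z • 1) := by
    rw [← fromBlocks_one, fromBlocks_smul, smul_zero]
  have h2 : fromBlocks (B⁻¹ * (E • 1 - A)) (-(B⁻¹ * C)) 1 0
      - fromBlocks (z • (1 : Matrix (Fin m) (Fin m) ℂ)) 0 0 (z • 1)
      = fromBlocks (B⁻¹ * (E • 1 - A) - z • 1) (-(B⁻¹ * C)) (1 : Matrix (Fin m) (Fin m) ℂ) (0 - z • 1) := by
    rw [sub_eq_add_neg, fromBlocks_neg, fromBlocks_add, neg_zero, add_zero, add_zero,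
      ← sub_eq_add_neg, ← sub_eq_add_neg]
  rw [h1, h2]
  have hD : Invertible ((0 : Matrix (Fin m) (Fin m) ℂ) - z • 1) :=
    invertibleOfIsUnitDet _ (by
      rw [zero_sub, ← neg_smul, det_smul, det_one, mul_one]
      exact (isUnit_iff_ne_zero.mpr (pow_ne_zero _ (neg_ne_zero.mpr hz))))
  rw [det_fromBlocks₂₂]
  have hinv : (⅟((0 : Matrix (Fin m) (Fin m) ℂ) - z • 1)) = (-z)⁻¹ • 1 := by
    apply invOf_eq_right_inv
    rw [zero_sub, ← neg_smul, Matrix.smul_mul, Matrix.mul_smul, Matrix.one_mul,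
      smul_smul, mul_inv_cancel₀ (neg_ne_zero.mpr hz), one_smul]
  rw [hinv]
  have hdet0 : ((0 : Matrix (Fin m) (Fin m) ℂ) - z • 1).det = (-z) ^ m := by
    rw [zero_sub, ← neg_smul, det_smul, det_one, mul_one, Fintype.card_fin]
  rw [hdet0]
  have hBinv : B⁻¹ * B = 1 := nonsing_inv_mul B hB
  have key : B⁻¹ * (E • 1 - A) - z • 1 - -(B⁻¹ * C) * ((-z)⁻¹ • 1) * 1
      = B⁻¹ * (E • (1 : Matrix (Fin m) (Fin m) ℂ) - (A + z • B + z⁻¹ • C)) := by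
    have e : -(B⁻¹ * C) * ((-z)⁻¹ • (1 : Matrix (Fin m) (Fin m) ℂ)) * 1
        = z⁻¹ • (B⁻¹ * C) := by
      rw [Matrix.mul_one, Matrix.mul_smul, Matrix.mul_one, ← neg_inv, neg_smul,
        smul_neg, neg_neg]
    rw [e]
    simp only [Matrix.mul_sub, Matrix.mul_add, Matrix.mul_smul, hBinv]
    abel
  rw [key, det_mul, det_nonsing_inv, Ring.inverse_eq_inv]
  ring
end

section
/- (Duality.) Let T(E) = t_n⋯t_1 with t_k = [[B_k⁻¹(E·I − A_k), −B_k⁻¹C_k], [I, 0]], all B_k, C_k invertible, n ≥ 2. Then for every z ≠ 0, det(T(E) − z·I_{2m}) = (−z)^m · det(E·I_{mn} − H(z)) / (det B_1 ⋯ det B_n), where H(z) is the mn×mn block tridiagonal matrix with diagonal blocks A_k, superdiagonal blocks B_k, subdiagonal blocks C_k, and corners (H(z))_{1n} = C_1/z, (H(z))_{n1} = z·B_n. -/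
open Matrix

/-- The `(a,b)` block of size `m` of an `mn × mn` matrix. -/
def blockOf {n m : ℕ} (M : Matrix (Fin n × Fin m) (Fin n × Fin m) ℂ) (a b : Fin n) :
    Matrix (Fin m) (Fin m) ℂ := fun i j => M (a, i) (b, j)

/-- The block tridiagonal matrix `H(z)`: diagonal blocks `A_k`, superdiagonal blocks `B_k`,
subdiagonal blocks `C_k`, and corner blocks `C_1/z` at position `(1,n)` and `z B_n`
at position `(n,1)`. -/
noncomputable def Hmat {n m : ℕ} (A B C : Fin n → Matrix (Fin m) (Fin m) ℂ) (z : ℂ) :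
    Matrix (Fin n × Fin m) (Fin n × Fin m) ℂ := fun p q =>
  ((if p.1 = q.1 then A p.1 else 0)
    + (if (q.1 : ℕ) = (p.1 : ℕ) + 1 then B p.1 else 0)
    + (if (p.1 : ℕ) = (q.1 : ℕ) + 1 then C p.1 else 0)
    + (if (p.1 : ℕ) = 0 ∧ (q.1 : ℕ) = n - 1 then z⁻¹ • C p.1 else 0)
    + (if (p.1 : ℕ) = n - 1 ∧ (q.1 : ℕ) = 0 then z • B p.1 else 0)) p.2 q.2

/-- The balanced block tridiagonal matrix `H^B(z)`: diagonal blocks `A_k`, superdiagonal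
blocks `z B_k`, subdiagonal blocks `C_k/z`, and corner blocks `C_1/z` at `(1,n)` and
`z B_n` at `(n,1)`. -/
noncomputable def HBmat {n m : ℕ} (A B C : Fin n → Matrix (Fin m) (Fin m) ℂ) (z : ℂ) :
    Matrix (Fin n × Fin m) (Fin n × Fin m) ℂ := fun p q =>
  ((if p.1 = q.1 then A p.1 else 0)
    + (if (q.1 : ℕ) = (p.1 : ℕ) + 1 then z • B p.1 else 0)
    + (if (p.1 : ℕ) = (q.1 : ℕ) + 1 then z⁻¹ • C p.1 else 0)
    + (if (p.1 : ℕ) = 0 ∧ (q.1 : ℕ) = n - 1 then z⁻¹ • C p.1 else 0)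
    + (if (p.1 : ℕ) = n - 1 ∧ (q.1 : ℕ) = 0 then z • B p.1 else 0)) p.2 q.2

/-- The block diagonal matrix `S(z)` with `k`-th diagonal block `z^k I_m`, `k = 1,…,n`. -/
noncomputable def Smat (n m : ℕ) (z : ℂ) :
    Matrix (Fin n × Fin m) (Fin n × Fin m) ℂ :=
  Matrix.diagonal fun p => z ^ ((p.1 : ℕ) + 1)

/-- The one-step transfer matrix `t_k = [[B_k⁻¹(E·I - A_k), -B_k⁻¹C_k], [I, 0]]`. -/
noncomputable def oneStep {m : ℕ} (A B C : Matrix (Fin m) (Fin m) ℂ) (E : ℂ) :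
    Matrix (Fin m ⊕ Fin m) (Fin m ⊕ Fin m) ℂ :=
  fromBlocks (B⁻¹ * (E • 1 - A)) (-(B⁻¹ * C)) 1 0

/-- The `n`-step transfer matrix `T(E) = t_n ⋯ t_1`. -/
noncomputable def transferMat {m n : ℕ} (A B C : Fin n → Matrix (Fin m) (Fin m) ℂ)
    (E : ℂ) : Matrix (Fin m ⊕ Fin m) (Fin m ⊕ Fin m) ℂ :=
  ((List.ofFn fun k : Fin n => oneStep (A k) (B k) (C k) E).reverse).prod

set_option linter.unusedSectionVars false
set_option maxHeartbeats 1000000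

section Blk
variable {R : Type*} [CommRing R] {ι : Type*} [Fintype ι] [DecidableEq ι] {n : ℕ}

/-- Assemble an `n×n` array of `ι×ι` matrices into one big matrix. -/
def blk (f : Fin n → Fin n → Matrix ι ι R) : Matrix (Fin n × ι) (Fin n × ι) R :=
  fun p q => f p.1 q.1 p.2 q.2

lemma blk_ext {f g : Fin n → Fin n → Matrix ι ι R} (h : ∀ a c, f a c = g a c) :
    blk f = blk g := by
  ext p q; rw [blk, blk, h]

lemma blk_mul (f g : Fin n → Fin n → Matrix ι ι R) :
    blk f * blk g = blk fun a c => ∑ b, f a b * g b c := by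
  ext p q
  simp [blk, Matrix.mul_apply, Fintype.sum_prod_type, Matrix.sum_apply]

lemma blk_one : (1 : Matrix (Fin n × ι) (Fin n × ι) R)
    = blk (fun a c => if a = c then 1 else 0) := by
  ext ⟨a, i⟩ ⟨c, j⟩
  by_cases h : a = c <;>
    simp [blk, Matrix.one_apply, Prod.ext_iff, h]

lemma blk_sub (f g : Fin n → Fin n → Matrix ι ι R) :
    blk f - blk g = blk (fun a c => f a c - g a c) := rfl

lemma blk_transpose (f : Fin n → Fin n → Matrix ι ι R) :
    (blk f)ᵀ = blk (fun a c => (f c a)ᵀ) := rfl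

lemma det_blk_upper (f : Fin n → Fin n → Matrix ι ι R)
    (h : ∀ a c : Fin n, c < a → f a c = 0) :
    (blk f).det = ∏ a, (f a a).det := by
  have hbt : (blk f).BlockTriangular Prod.fst := by
    intro p q hlt
    show f p.1 q.1 p.2 q.2 = 0
    rw [h _ _ hlt]; rfl
  rw [hbt.det_fintype]
  refine Finset.prod_congr rfl fun k _ => ?_
  let e : {p : Fin n × ι // p.1 = k} ≃ ι :=
    { toFun := fun x => x.1.2
      invFun := fun i => ⟨(k, i), rfl⟩
      left_inv := by rintro ⟨⟨a, i⟩, rfl⟩; rfl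
      right_inv := fun i => rfl }
  have heq : (blk f).toSquareBlock Prod.fst k = (f k k).submatrix e e := by
    ext x y
    have hx := x.2
    have hy := y.2
    simp [Matrix.toSquareBlock_def, blk, Matrix.submatrix_apply, e, hx, hy]
  rw [heq, Matrix.det_submatrix_equiv_self]

lemma det_blk_lower (f : Fin n → Fin n → Matrix ι ι R)
    (h : ∀ a c : Fin n, a < c → f a c = 0) :
    (blk f).det = ∏ a, (f a a).det := by
  rw [← Matrix.det_transpose, blk_transpose,
    det_blk_upper (fun a c => (f c a)ᵀ) (fun a c hlt => by simp [h _ _ hlt])]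
  simp

end Blk
section Prods
variable {M : Type*} [Monoid M]

/-- `Rf X k l = X (k-1) * ⋯ * X l` (and `1` if `l ≥ k`). -/
def Rf (X : ℕ → M) : ℕ → ℕ → M
  | 0, _ => 1
  | (k+1), l => if k + 1 ≤ l then 1 else X k * Rf X k l

lemma Rf_of_le (X : ℕ → M) {k l : ℕ} (h : k ≤ l) : Rf X k l = 1 := by
  cases k with
  | zero => rfl
  | succ k => rw [Rf, if_pos h]

lemma Rf_succ (X : ℕ → M) {k l : ℕ} (h : l < k + 1) : Rf X (k+1) l = X k * Rf X k l := by
  rw [Rf, if_neg (by omega)]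

lemma Rf_mul (X : ℕ → M) {k l : ℕ} (h : l < k) : Rf X k (l+1) * X l = Rf X k l := by
  induction k with
  | zero => omega
  | succ k ih =>
    rcases Nat.lt_or_ge l k with hk | hk
    · rw [Rf_succ X (by omega), Rf_succ X (by omega), mul_assoc, ih hk]
    · have : l = k := by omega
      subst this
      rw [Rf_of_le X (le_refl (l+1)), Rf_succ X (by omega), Rf_of_le X (le_refl l),
        one_mul, mul_one]

lemma Rf_congr {X Y : ℕ → M} {k l : ℕ} (h : ∀ j, l ≤ j → j < k → X j = Y j) :
    Rf X k l = Rf Y k l := by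
  induction k with
  | zero => rfl
  | succ k ih =>
    rcases Nat.lt_or_ge l (k+1) with hk | hk
    · rw [Rf_succ X hk, Rf_succ Y hk, h k (by omega) (by omega),
        ih (fun j hj hj' => h j hj (by omega))]
    · rw [Rf_of_le X hk, Rf_of_le Y hk]

lemma listProd_eq (n : ℕ) (f : Fin n → M) :
    (List.ofFn f).reverse.prod = Rf (fun j => if h : j < n then f ⟨j, h⟩ else 1) n 0 := by
  induction n with
  | zero => simp [Rf]
  | succ n ih =>
    rw [List.ofFn_succ']
    simp only [List.concat_eq_append, List.reverse_append, List.reverse_cons,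
      List.reverse_nil, List.nil_append, List.singleton_append, List.prod_cons]
    rw [ih (fun i => f i.castSucc), Rf_succ _ (by omega)]
    congr 1
    · rw [dif_pos (by omega : n < n + 1)]
      rfl
    · exact Rf_congr (fun j hj hj' => by
        rw [dif_pos hj', dif_pos (by omega : j < n + 1)]
        rfl)

end Prods

section CyclicDet
variable {R : Type*} [CommRing R] {ι : Type*} [Fintype ι] [DecidableEq ι]

lemma det_cyclic (N : ℕ) (X : Fin (N+2) → Matrix ι ι R) :
    (blk (fun a c => (if a = c then (1 : Matrix ι ι R) else 0)
        + (if a = c + 1 then -X c else 0))).det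
      = (1 - Rf (fun j => if h : j < N+2 then X ⟨j, h⟩ else 1) (N+1) 0
          * X (Fin.last (N+1))).det := by
  set X' : ℕ → Matrix ι ι R := fun j => if h : j < N+2 then X ⟨j, h⟩ else 1 with hX'
  have hX'val : ∀ b : Fin (N+2), X' (b : ℕ) = X b := by
    intro b; rw [hX']; exact dif_pos b.isLt
  set efn : Fin (N+2) → Fin (N+2) → Matrix ι ι R :=
    fun k l => if (l : ℕ) ≤ (k : ℕ) then Rf X' (k : ℕ) (l : ℕ) else 0 with hefn
  set ufn : Fin (N+2) → Fin (N+2) → Matrix ι ι R :=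
    fun k b => if (b : ℕ) = N+1 then
        ((if k = b then (1 : Matrix ι ι R) else 0)
          - Rf X' (k : ℕ) 0 * X (Fin.last (N+1)))
      else (if k = b then 1 else 0) with hufn
  have hEG : blk efn * blk (fun a c => (if a = c then (1 : Matrix ι ι R) else 0)
      + (if a = c + 1 then -X c else 0)) = blk ufn := by
    rw [blk_mul]
    apply blk_ext
    intro k b
    have hcol : ∀ l : Fin (N+2),
        efn k l * ((if l = b then (1 : Matrix ι ι R) else 0)
          + (if l = b + 1 then -X b else 0))
        = (if l = b then efn k l else 0) + (if l = b + 1 then -(efn k l * X b) else 0) := by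
      intro l
      rw [mul_add, mul_ite, mul_ite, mul_one, mul_zero, mul_neg]
    simp only [hcol, Finset.sum_add_distrib, Finset.sum_ite_eq', Finset.mem_univ, if_true]
    by_cases hb : (b : ℕ) = N+1
    · have hbl : b = Fin.last (N+1) := Fin.ext hb
      have hXb : X b = X (Fin.last (N+1)) := by rw [hbl]
      have hb1 : b + 1 = 0 := by rw [hbl, Fin.last_add_one]
      have h0 : efn k (b+1) = Rf X' (k : ℕ) 0 := by
        rw [hb1]; simp only [hefn]; simp
      by_cases hk : k = b
      · subst hk
        have he1 : efn k k = 1 := by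
          rw [hefn]; simp [Rf_of_le X' (le_refl (k:ℕ))]
        rw [he1, h0]; simp only [hufn]
        simp [hb, hXb, sub_eq_add_neg]
      · have hklt : (k : ℕ) < N + 1 := by
          have hki := k.isLt
          rcases Nat.lt_or_ge (k : ℕ) (N+1) with h | h
          · exact h
          · exact absurd (Fin.ext (by omega : (k:ℕ) = (b:ℕ))) hk
        have he1 : efn k b = 0 := by
          simp only [hefn]
          rw [if_neg (by omega)]
        rw [he1, h0]; simp only [hufn]
        simp [hb, hXb, hk, sub_eq_add_neg]
    · have hbl' : ¬ (b = Fin.last (N+1)) := fun h => hb (by rw [h, Fin.val_last])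
      have hb1 : ((b + 1 : Fin (N+2)) : ℕ) = (b : ℕ) + 1 := by
        rw [Fin.val_add_one, if_neg hbl']
      simp only [hufn]
      simp only [hb, if_false]
      rcases lt_trichotomy (k : ℕ) (b : ℕ) with h | h | h
      · have hkb : ¬ (k = b) := fun hh => by rw [hh] at h; omega
        have e1 : efn k b = 0 := by simp only [hefn]; rw [if_neg (by omega)]
        have e2 : efn k (b+1) = 0 := by simp only [hefn, hb1]; rw [if_neg (by omega)]
        rw [e1, e2]; simp [hkb]
      · have hkb : k = b := Fin.ext h
        have e1 : efn k b = 1 := by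
          simp only [hefn]; rw [if_pos (le_of_eq h.symm), h, Rf_of_le X' (le_refl (b:ℕ))]
        have e2 : efn k (b+1) = 0 := by simp only [hefn, hb1]; rw [if_neg (by omega)]
        rw [e1, e2]; simp [hkb]
      · have hkb : ¬ (k = b) := fun hh => by rw [hh] at h; omega
        have e1 : efn k b = Rf X' (k : ℕ) (b : ℕ) := by
          simp only [hefn]; rw [if_pos (by omega)]
        have e2 : efn k (b+1) = Rf X' (k : ℕ) ((b : ℕ)+1) := by
          simp only [hefn, hb1]; rw [if_pos (by omega)]
        rw [e1, e2, ← hX'val b, Rf_mul X' h]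
        simp [hkb]
  have hdetE : (blk efn).det = 1 := by
    rw [det_blk_lower]
    · refine Finset.prod_eq_one (fun a _ => ?_)
      simp only [hefn]; simp [Rf_of_le X' (le_refl (a:ℕ))]
    · intro a c hlt
      have hlt' : (a : ℕ) < (c : ℕ) := hlt
      simp only [hefn]
      rw [if_neg (by omega)]
  have hdetU : (blk ufn).det
      = (1 - Rf X' (N+1) 0 * X (Fin.last (N+1))).det := by
    rw [det_blk_upper]
    · rw [Finset.prod_eq_single (Fin.last (N+1))]
      · simp only [hufn]; simp [Fin.val_last]
      · intro a _ ha
        have hav : (a : ℕ) ≠ N + 1 := fun h => ha (Fin.ext h)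
        simp only [hufn]; simp [hav]
      · simp
    · intro a c hlt
      have hcv : (c : ℕ) < N + 1 := by
        have := a.isLt
        have : (c : ℕ) < (a : ℕ) := hlt
        omega
      have hac : ¬ (a = c) := fun h => by rw [h] at hlt; exact lt_irrefl _ hlt
      simp only [hufn]; simp [Nat.ne_of_lt hcv, hac]
  have hfin := congrArg Matrix.det hEG
  rw [Matrix.det_mul, hdetE, one_mul] at hfin
  rw [hfin, hdetU]

end CyclicDet

/-- Duality: for `z ≠ 0`,
`det(T(E) − z·I_{2m}) = (−z)^m det(E·I_{mn} − H(z)) / (det B_1 ⋯ det B_n)`. -/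
theorem stmt_10 {m n : ℕ} (hn : 2 ≤ n) (A B C : Fin n → Matrix (Fin m) (Fin m) ℂ)
    (hB : ∀ k, IsUnit (B k).det) (hC : ∀ k, IsUnit (C k).det)
    (E : ℂ) (z : ℂ) (hz : z ≠ 0) :
    (transferMat A B C E
        - z • (1 : Matrix (Fin m ⊕ Fin m) (Fin m ⊕ Fin m) ℂ)).det =
      (-z) ^ m *
        (E • (1 : Matrix (Fin n × Fin m) (Fin n × Fin m) ℂ) - Hmat A B C z).det /
        ∏ k : Fin n, (B k).det := by
  classical
  obtain ⟨N, rfl⟩ : ∃ N, n = N + 2 := ⟨n - 2, by omega⟩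
  clear hn
  set ι := (Fin m ⊕ Fin m) with hι
  set t : Fin (N+2) → Matrix ι ι ℂ := fun k => oneStep (A k) (B k) (C k) E with ht
  set ζ : Fin (N+2) → ℂ := fun c => if (c : ℕ) = N+1 then z⁻¹ else 1 with hζ
  set X : Fin (N+2) → Matrix ι ι ℂ := fun k => ζ k • t k with hXdef
  set X' : ℕ → Matrix ι ι ℂ := fun j => if h : j < N+2 then X ⟨j, h⟩ else 1 with hX'
  set t' : ℕ → Matrix ι ι ℂ := fun j => if h : j < N+2 then t ⟨j, h⟩ else 1 with ht'
  have haddne : ∀ c : Fin (N+2), (c + 1 : Fin (N+2)) ≠ c := by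
    intro c h
    have hv := congrArg Fin.val h
    rw [Fin.val_add_one] at hv
    by_cases hc : c = Fin.last (N+1)
    · rw [if_pos hc] at hv; rw [hc, Fin.val_last] at hv; omega
    · rw [if_neg hc] at hv; omega
  -- Step A: transfer matrix as recursive product
  have hT : transferMat A B C E = t (Fin.last (N+1)) * Rf t' (N+1) 0 := by
    rw [transferMat]
    have hlp := listProd_eq (N+2) t
    rw [show (List.ofFn fun k : Fin (N+2) => oneStep (A k) (B k) (C k) E)
        = List.ofFn t from rfl, hlp, ← ht', Rf_succ _ (by omega)]
    congr 1
    simp only [ht']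
    rw [dif_pos (by omega : N + 1 < N + 2)]
    rfl
  -- Step B: z⁻¹ • T as a product involving X
  have hRfX : Rf X' (N+1) 0 = Rf t' (N+1) 0 := by
    apply Rf_congr
    intro j _ hj
    simp only [hX', ht', hXdef]
    rw [dif_pos (by omega : j < N+2), dif_pos (by omega : j < N+2)]
    have hζ1 : ζ ⟨j, by omega⟩ = 1 := by
      simp only [hζ]; exact if_neg (by simpa using (by omega : j ≠ N+1))
    rw [hζ1, one_smul]
  have hXlast : X (Fin.last (N+1)) = z⁻¹ • t (Fin.last (N+1)) := by
    simp only [hXdef]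
    rw [show ζ (Fin.last (N+1)) = z⁻¹ by simp only [hζ]; simp]
  have hzT : z⁻¹ • transferMat A B C E = X (Fin.last (N+1)) * Rf X' (N+1) 0 := by
    rw [hT, hXlast, hRfX, smul_mul_assoc]
  -- Step C: det (T - z•1)
  have hcard : Fintype.card ι = m + m := by simp [hι]
  have eq1 : (transferMat A B C E - z • 1).det
      = (-z)^(m+m) * (1 - z⁻¹ • transferMat A B C E).det := by
    have hfac : transferMat A B C E - z • (1 : Matrix ι ι ℂ)
        = (-z) • (1 - z⁻¹ • transferMat A B C E) := by
      rw [smul_sub, smul_smul, neg_mul, mul_inv_cancel₀ hz]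
      module
    rw [hfac, Matrix.det_smul, hcard]
  -- gfn : the cyclic companion block structure
  set gfn : Fin (N+2) → Fin (N+2) → Matrix ι ι ℂ :=
    fun a c => (if a = c then (1 : Matrix ι ι ℂ) else 0)
      + (if a = c + 1 then -X c else 0) with hgfn
  -- Step D: to the cyclic determinant
  have eq2 : (1 - z⁻¹ • transferMat A B C E).det = (blk gfn).det := by
    rw [hzT]
    have hcomm : (1 - X (Fin.last (N+1)) * Rf X' (N+1) 0).det
        = (1 - Rf X' (N+1) 0 * X (Fin.last (N+1))).det := by
      have h := Matrix.det_one_add_mul_comm (-(X (Fin.last (N+1)))) (Rf X' (N+1) 0)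
      rw [Matrix.neg_mul, ← sub_eq_add_neg, Matrix.mul_neg, ← sub_eq_add_neg] at h
      exact h
    rw [hcomm]
    exact (det_cyclic N X).symm
  -- the block row multiplier
  set Dm : Fin (N+2) → Matrix ι ι ℂ := fun a => fromBlocks (B (a - 1)) 0 0 1 with hDm
  have hLG : blk (fun a b => if a = b then Dm a else 0) * blk gfn
      = blk (fun a c => Dm a * gfn a c) := by
    rw [blk_mul]
    apply blk_ext
    intro a c
    rw [Finset.sum_eq_single a]
    · rw [if_pos rfl]
    · intro b _ hb
      rw [if_neg (fun h => hb h.symm), zero_mul]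
    · intro h; exact absurd (Finset.mem_univ a) h
  have hdetL : (blk (fun a b => if a = b then Dm a else 0)).det
      = ∏ k, (B k).det := by
    rw [det_blk_upper _ (fun a c hlt =>
      if_neg (fun h => by rw [h] at hlt; exact lt_irrefl _ hlt))]
    have h1 : ∀ a : Fin (N+2), (if a = a then Dm a else 0).det = (B (a-1)).det := by
      intro a
      rw [if_pos rfl]
      simp only [hDm]
      rw [Matrix.det_fromBlocks_zero₂₁, Matrix.det_one, mul_one]
    rw [Finset.prod_congr rfl (fun a _ => h1 a)]
    exact (Fintype.prod_equiv (Equiv.addRight (1 : Fin (N+2))) _ _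
      (fun k => by simp)).symm
  -- Step F: the block structure of Dm * gfn
  set wfn : Fin (N+2) → Fin (N+2) → Matrix (Fin m) (Fin m) ℂ :=
    fun a c => (if a = c then B (a - 1) else 0)
      + (if a = c + 1 then ζ c • (A c - E • 1) else 0) with hwfn
  set xfn : Fin (N+2) → Fin (N+2) → Matrix (Fin m) (Fin m) ℂ :=
    fun a c => if a = c + 1 then ζ c • C c else 0 with hxfn
  set yfn : Fin (N+2) → Fin (N+2) → Matrix (Fin m) (Fin m) ℂ :=
    fun a c => if a = c + 1 then (-(ζ c)) • (1 : Matrix (Fin m) (Fin m) ℂ) else 0 with hyfn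
  have hblock : ∀ a c, Dm a * gfn a c
      = fromBlocks (wfn a c) (xfn a c) (yfn a c) (if a = c then 1 else 0) := by
    intro a c
    by_cases h1 : a = c
    · subst h1
      have hne : ¬ (a = a + 1) := fun h => (haddne a) h.symm
      simp only [hgfn, hwfn, hxfn, hyfn, hDm, if_pos rfl, if_neg hne, add_zero, mul_one,
        eq_self_iff_true, if_true]
    · by_cases h2 : a = c + 1
      · subst h2
        have hne : ¬ (c + 1 = c) := haddne c
        simp only [hgfn, hwfn, hxfn, hyfn, if_neg hne, if_pos rfl, zero_add, add_zero,
          eq_self_iff_true, if_true]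
        have hDmc : Dm (c+1) = fromBlocks (B c) 0 0 1 := by
          simp only [hDm]; rw [add_sub_cancel_right]
        rw [hDmc]
        simp only [hXdef, ht]
        rw [oneStep, Matrix.mul_neg, Matrix.mul_smul, Matrix.fromBlocks_multiply]
        simp only [Matrix.mul_one, Matrix.mul_zero, Matrix.zero_mul, add_zero, zero_add,
          Matrix.one_mul]
        rw [← Matrix.mul_assoc, Matrix.mul_nonsing_inv _ (hB c), Matrix.one_mul,
          Matrix.mul_neg, ← Matrix.mul_assoc, Matrix.mul_nonsing_inv _ (hB c),
          Matrix.one_mul]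
        ext u v
        rcases u with u | u <;> rcases v with v | v <;>
          simp [Matrix.neg_apply, Matrix.smul_apply, Matrix.sub_apply, Matrix.one_apply,
            Matrix.fromBlocks_apply₁₁, Matrix.fromBlocks_apply₁₂, Matrix.fromBlocks_apply₂₁,
            Matrix.fromBlocks_apply₂₂] <;> ring
      · simp only [hgfn, hwfn, hxfn, hyfn, if_neg h1, if_neg h2, add_zero, mul_zero]
        rw [Matrix.fromBlocks_zero]
  -- Step G: reindex to a 2x2 block matrix
  have eq3 : (blk (fun a c => Dm a * gfn a c)).det
      = (fromBlocks (blk wfn) (blk xfn) (blk yfn) 1).det := by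
    rw [← Matrix.det_submatrix_equiv_self
      ((Equiv.prodSumDistrib (Fin (N+2)) (Fin m) (Fin m)).symm)
      (blk (fun a c => Dm a * gfn a c))]
    congr 1
    rw [blk_one (R := ℂ) (ι := Fin m) (n := N+2)]
    ext p q
    rcases p with ⟨a, i⟩ | ⟨a, i⟩ <;> rcases q with ⟨c, j⟩ | ⟨c, j⟩ <;>
      simp only [Matrix.submatrix_apply, Equiv.prodSumDistrib_symm_apply_left,
        Equiv.prodSumDistrib_symm_apply_right, blk, Matrix.fromBlocks_apply₁₁,
        Matrix.fromBlocks_apply₁₂, Matrix.fromBlocks_apply₂₁, Matrix.fromBlocks_apply₂₂,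
        hblock a c] <;> rfl
  -- Step H: Schur complement and the product xfn * yfn
  have hshift : ∀ a b : Fin (N+2), (a = b + 1) ↔ (b = a - 1) := by
    intro a b
    constructor
    · intro h; rw [h]; rw [add_sub_cancel_right]
    · intro h; rw [h]; rw [sub_add_cancel]
  set xyfn : Fin (N+2) → Fin (N+2) → Matrix (Fin m) (Fin m) ℂ :=
    fun a c => (ζ (a-1) • C (a-1)) *
      (if a - 1 = c + 1 then (-(ζ c)) • (1 : Matrix (Fin m) (Fin m) ℂ) else 0) with hxyfn
  have hXY : blk xfn * blk yfn = blk xyfn := by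
    rw [blk_mul]
    apply blk_ext
    intro a c
    simp only [hxfn, hyfn, hxyfn]
    rw [Finset.sum_eq_single (a - 1)]
    · rw [if_pos ((hshift a (a-1)).mpr rfl)]
    · intro b _ hb
      rw [if_neg (fun h => hb ((hshift a b).mp h)), zero_mul]
    · intro h; exact absurd (Finset.mem_univ _) h
  set mfn : Fin (N+2) → Fin (N+2) → Matrix (Fin m) (Fin m) ℂ :=
    fun a c => wfn a c - xyfn a c with hmfn
  have eq4 : (fromBlocks (blk wfn) (blk xfn) (blk yfn)
      (1 : Matrix (Fin (N+2) × Fin m) (Fin (N+2) × Fin m) ℂ)).det = (blk mfn).det := by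
    rw [Matrix.det_fromBlocks_one₂₂, hXY, blk_sub]
  -- Step I: permute the block rows
  set σp : Equiv.Perm (Fin (N+2) × Fin m) :=
    Equiv.prodCongrLeft (fun _ : Fin m => finRotate (N+2)) with hσp
  set nfn : Fin (N+2) → Fin (N+2) → Matrix (Fin m) (Fin m) ℂ :=
    fun k c => mfn (k+1) c with hnfn
  have hperm : (blk mfn).submatrix σp id = blk nfn := by
    ext ⟨k, i⟩ ⟨c, j⟩
    rw [Matrix.submatrix_apply, hσp]
    rw [show (Equiv.prodCongrLeft (fun _ : Fin m => finRotate (N+2))) (k, i)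
      = (k + 1, i) by rw [Equiv.prodCongrLeft_apply, finRotate_succ_apply]]
    rfl
  have eq5 : (blk nfn).det = ((-1 : ℂ))^((N+1)*m) * (blk mfn).det := by
    rw [← hperm, Matrix.det_permute]
    congr 1
    rw [hσp, Equiv.Perm.sign_prodCongrLeft]
    simp only [sign_finRotate, Finset.prod_const, Finset.card_univ, Fintype.card_fin]
    rw [pow_mul]
    push_cast
    norm_num
  -- Step J: rescale the last block row
  set ρ : Fin (N+2) → ℂ := fun k => if (k : ℕ) = N+1 then z else 1 with hρ
  have hdiagmul : Matrix.diagonal (fun p : Fin (N+2) × Fin m => ρ p.1) * blk nfn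
      = blk (fun k c => ρ k • nfn k c) := by
    ext ⟨k, i⟩ ⟨c, j⟩
    rw [Matrix.diagonal_mul]
    rfl
  have hdetdiag : (Matrix.diagonal (fun p : Fin (N+2) × Fin m => ρ p.1)).det = z^m := by
    rw [Matrix.det_diagonal, Fintype.prod_prod_type]
    have hval : ∀ k : Fin (N+2), (∏ _i : Fin m, ρ k) = if k = Fin.last (N+1) then z^m else 1 := by
      intro k
      rw [Finset.prod_const, Finset.card_univ, Fintype.card_fin]
      simp only [hρ]
      by_cases hk : (k : ℕ) = N+1
      · rw [if_pos hk, if_pos (Fin.ext hk)]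
      · rw [if_neg hk, if_neg (fun h => hk (by rw [h, Fin.val_last])), one_pow]
    rw [Finset.prod_congr rfl (fun k _ => hval k), Finset.prod_ite_eq']
    rw [if_pos (Finset.mem_univ _)]
  have eq6 : z^m * (blk nfn).det = (blk (fun k c => ρ k • nfn k c)).det := by
    rw [← hdiagmul, Matrix.det_mul, hdetdiag]
  -- Step K: identification with Hmat
  have hval_add_one : ∀ k : Fin (N+2), ((k + 1 : Fin (N+2)) : ℕ)
      = if (k : ℕ) = N+1 then 0 else (k : ℕ) + 1 := by
    intro k
    rw [Fin.val_add_one]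
    by_cases hk : k = Fin.last (N+1)
    · rw [if_pos hk, if_pos (by rw [hk, Fin.val_last])]
    · rw [if_neg hk, if_neg (fun h => hk (Fin.ext (by rw [h, Fin.val_last])))]
  have hprodCC : ∀ k c : Fin (N+2), (ζ k • C k) * ((-(ζ c)) • (1 : Matrix (Fin m) (Fin m) ℂ))
      = -((ζ k * ζ c) • C k) := by
    intro k c
    rw [smul_mul_assoc, Matrix.mul_smul, Matrix.mul_one, smul_smul, mul_neg, neg_smul]
  have hnfn_eq : ∀ k c : Fin (N+2), nfn k c
      = (if k + 1 = c then B k else 0)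
      + (if k = c then ζ c • (A c - E • 1) else 0)
      + (if k = c + 1 then (ζ k * ζ c) • C k else 0) := by
    intro k c
    simp only [hnfn, hmfn, hwfn, hxyfn, add_sub_cancel_right, add_left_inj]
    rw [mul_ite, mul_zero, hprodCC k c]
    by_cases h3 : k = c + 1
    · rw [if_pos h3, if_pos h3, sub_neg_eq_add]
    · rw [if_neg h3, if_neg h3, sub_zero, add_zero]
  have hv1 : ∀ k c : Fin (N+2),
      (k + 1 = c) ↔ ((c:ℕ) = (k:ℕ)+1 ∨ ((k:ℕ) = N+1 ∧ (c:ℕ) = 0)) := by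
    intro k c
    have hkb := k.isLt
    have hcb := c.isLt
    rw [Fin.ext_iff, hval_add_one k]
    by_cases hk : (k:ℕ) = N+1
    · rw [if_pos hk]
      constructor
      · intro h; exact Or.inr ⟨hk, h.symm⟩
      · rintro (h | ⟨-, h⟩) <;> omega
    · rw [if_neg hk]
      constructor
      · intro h; exact Or.inl h.symm
      · rintro (h | ⟨h, -⟩) <;> omega
  have hv3 : ∀ k c : Fin (N+2),
      (k = c + 1) ↔ ((k:ℕ) = (c:ℕ)+1 ∨ ((c:ℕ) = N+1 ∧ (k:ℕ) = 0)) := by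
    intro k c
    rw [eq_comm]
    exact hv1 c k
  have key : ∀ k c : Fin (N+2), ρ k • nfn k c
      = ((if k = c then A k else 0)
        + (if (c : ℕ) = (k : ℕ) + 1 then B k else 0)
        + (if (k : ℕ) = (c : ℕ) + 1 then C k else 0)
        + (if (k : ℕ) = 0 ∧ (c : ℕ) = N + 1 then z⁻¹ • C k else 0)
        + (if (k : ℕ) = N + 1 ∧ (c : ℕ) = 0 then z • B k else 0))
        - (if k = c then E • 1 else 0) := by
    intro k c
    have hkb := k.isLt
    have hcb := c.isLt
    rw [hnfn_eq k c]
    by_cases hd : k = c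
    · subst hd
      simp only [hv1 k k, hv3 k k, hρ, hζ, if_pos rfl]
      split_ifs <;>
        first
          | (exfalso; omega)
          | (match_scalars <;> (field_simp; try ring))
    · have hd' : ¬ ((k:ℕ) = (c:ℕ)) := fun h => hd (Fin.ext h)
      simp only [hv1 k c, hv3 k c, hρ, hζ, if_neg hd]
      split_ifs <;>
        first
          | (exfalso; omega)
          | (match_scalars <;> (field_simp; try ring))
  have eqK : blk (fun k c => ρ k • nfn k c)
      = Hmat A B C z - E • (1 : Matrix (Fin (N+2) × Fin m) (Fin (N+2) × Fin m) ℂ) := by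
    ext ⟨k, i⟩ ⟨c, j⟩
    show (ρ k • nfn k c) i j
        = Hmat A B C z (k, i) (c, j)
          - (E • (1 : Matrix (Fin (N+2) × Fin m) (Fin (N+2) × Fin m) ℂ)) (k, i) (c, j)
    rw [key k c]
    have hH : Hmat A B C z (k, i) (c, j)
        = ((if k = c then A k else 0)
          + (if (c : ℕ) = (k : ℕ) + 1 then B k else 0)
          + (if (k : ℕ) = (c : ℕ) + 1 then C k else 0)
          + (if (k : ℕ) = 0 ∧ (c : ℕ) = N + 1 then z⁻¹ • C k else 0)
          + (if (k : ℕ) = N + 1 ∧ (c : ℕ) = 0 then z • B k else 0)) i j := rfl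
    rw [Matrix.sub_apply, hH]
    congr 1
    by_cases hkc : k = c
    · subst hkc
      by_cases hij : i = j <;>
        simp [hij, Matrix.one_apply, Matrix.smul_apply, Prod.ext_iff]
    · have hne : ¬ ((k, i) = (c, j)) := fun h => hkc (congrArg Prod.fst h)
      simp [hkc, hne, Matrix.one_apply, Matrix.smul_apply]
  have eq7 : (Hmat A B C z - E • (1 : Matrix (Fin (N+2) × Fin m) (Fin (N+2) × Fin m) ℂ)).det
      = ((-1 : ℂ))^((N+2)*m) *
        (E • (1 : Matrix (Fin (N+2) × Fin m) (Fin (N+2) × Fin m) ℂ) - Hmat A B C z).det := by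
    have hdn := Matrix.det_neg
      (E • (1 : Matrix (Fin (N+2) × Fin m) (Fin (N+2) × Fin m) ℂ) - Hmat A B C z)
    rw [neg_sub] at hdn
    rw [hdn, Fintype.card_prod, Fintype.card_fin, Fintype.card_fin]
  -- final algebra
  have hpB : (∏ k, (B k).det) ≠ 0 := by
    rw [Finset.prod_ne_zero_iff]
    exact fun k _ => (hB k).ne_zero
  have hscal : ((-z : ℂ)^(m+m)) * ((-1:ℂ)^((N+1)*m) * (-1:ℂ)^((N+2)*m)) = (-z)^m * z^m := by
    rw [← pow_add]
    have h1 : (N+1)*m + (N+2)*m = (2*N+3)*m := by ring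
    rw [h1, pow_mul, show ((-1:ℂ))^(2*N+3) = -1 from Odd.neg_one_pow ⟨N+1, by ring⟩]
    rw [pow_add, mul_assoc, ← mul_pow, show (-z) * (-1 : ℂ) = z by ring]
  -- put everything together
  have hGM : (∏ k, (B k).det) * (blk gfn).det = (blk mfn).det := by
    rw [← eq4, ← eq3, ← hLG, Matrix.det_mul, hdetL]
  have hMN : (blk mfn).det = ((-1 : ℂ))^((N+1)*m) * (blk nfn).det := by
    rw [eq5, ← mul_assoc, ← pow_add]
    have : (N+1)*m + (N+1)*m = 2*((N+1)*m) := by ring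
    rw [this, pow_mul, neg_one_sq, one_pow, one_mul]
  have hND : z^m * (blk nfn).det = ((-1 : ℂ))^((N+2)*m) *
      (E • (1 : Matrix (Fin (N+2) × Fin m) (Fin (N+2) × Fin m) ℂ) - Hmat A B C z).det := by
    rw [eq6, eqK, eq7]
  rw [eq1, eq2]
  rw [eq_div_iff hpB]
  apply mul_right_cancel₀ (pow_ne_zero m hz)
  calc (-z)^(m+m) * (blk gfn).det * (∏ k, (B k).det) * z^m
      = (-z)^(m+m) * ((∏ k, (B k).det) * (blk gfn).det) * z^m := by ring
    _ = (-z)^(m+m) * (blk mfn).det * z^m := by rw [hGM]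
    _ = (-z)^(m+m) * ((-1 : ℂ))^((N+1)*m) * (z^m * (blk nfn).det) := by rw [hMN]; ring
    _ = (-z)^(m+m) * ((-1 : ℂ))^((N+1)*m) * (((-1 : ℂ))^((N+2)*m) *
          (E • (1 : Matrix (Fin (N+2) × Fin m) (Fin (N+2) × Fin m) ℂ)
            - Hmat A B C z).det) := by rw [hND]
    _ = (((-z : ℂ)^(m+m)) * ((-1:ℂ)^((N+1)*m) * (-1:ℂ)^((N+2)*m))) *
          (E • (1 : Matrix (Fin (N+2) × Fin m) (Fin (N+2) × Fin m) ℂ)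
            - Hmat A B C z).det := by ring
    _ = (-z)^m * (E • (1 : Matrix (Fin (N+2) × Fin m) (Fin (N+2) × Fin m) ℂ)
            - Hmat A B C z).det * z^m := by rw [hscal]; ring
end

section
/- As a corollary of duality: z is an eigenvalue of T(E) if and only if E is an eigenvalue of H(z), for z ≠ 0. -/
open Matrix

/- ## auxiliary -/

lemma algmap_mulVec {N : Type*} [Fintype N] [DecidableEq N] (z : ℂ) (v : N → ℂ) :
    (algebraMap ℂ (Matrix N N ℂ)) z *ᵥ v = z • v := by
  rw [Matrix.algebraMap_eq_diagonal]; ext i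
  simp [Matrix.mulVec_diagonal, Algebra.algebraMap_self_apply]

lemma mem_spectrum_iff_exists {N : Type*} [Fintype N] [DecidableEq N] (M : Matrix N N ℂ) (z : ℂ) :
    z ∈ spectrum ℂ M ↔ ∃ v, v ≠ 0 ∧ M *ᵥ v = z • v := by
  rw [spectrum.mem_iff, Matrix.isUnit_iff_isUnit_det]
  have h1 : ¬ IsUnit ((algebraMap ℂ (Matrix N N ℂ)) z - M).det ↔
      ((algebraMap ℂ (Matrix N N ℂ)) z - M).det = 0 := by
    constructor
    · intro h; by_contra h0; exact h (Ne.isUnit h0)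
    · intro h; rw [h]; exact fun hu => by simpa using hu.ne_zero
  rw [h1, ← Matrix.exists_mulVec_eq_zero_iff]
  constructor
  · rintro ⟨v, hv, h⟩
    rw [sub_mulVec, algmap_mulVec, sub_eq_zero] at h
    exact ⟨v, hv, h.symm⟩
  · rintro ⟨v, hv, h⟩
    exact ⟨v, hv, by rw [sub_mulVec, algmap_mulVec, h, sub_self]⟩

lemma sum_ite_coe {n : ℕ} (c : ℕ) (f : Fin n → ℂ) :
    ∑ b : Fin n, (if (b : ℕ) = c then f b else 0) = if h : c < n then f ⟨c, h⟩ else 0 := by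
  split_ifs with h
  · rw [Finset.sum_eq_single ⟨c, h⟩]
    · simp
    · intro b _ hb
      rw [if_neg]
      intro hc; exact hb (Fin.ext hc)
    · simp
  · apply Finset.sum_eq_zero
    intro b _
    rw [if_neg]
    intro hc; exact h (hc ▸ b.isLt)

def colF {n m : ℕ} (ψ : Fin n × Fin m → ℂ) (b : Fin n) : Fin m → ℂ := fun j => ψ (b, j)

lemma oneStep_mulVec {m : ℕ} (A B C : Matrix (Fin m) (Fin m) ℂ) (E : ℂ) (x y : Fin m → ℂ) :
    (oneStep A B C E) *ᵥ (Sum.elim x y)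
      = Sum.elim (B⁻¹ *ᵥ (E • x - A *ᵥ x - C *ᵥ y)) x := by
  have h1 : (B⁻¹ * (E • 1 - A)) *ᵥ x + (-(B⁻¹ * C)) *ᵥ y
      = B⁻¹ *ᵥ (E • x - A *ᵥ x - C *ᵥ y) := by
    rw [← Matrix.mulVec_mulVec, Matrix.neg_mulVec, ← Matrix.mulVec_mulVec,
      ← Matrix.mulVec_neg, ← Matrix.mulVec_add]
    congr 1
    rw [Matrix.sub_mulVec, Matrix.smul_mulVec, Matrix.one_mulVec]
    abel
  have h2 : (1 : Matrix (Fin m) (Fin m) ℂ) *ᵥ x + (0 : Matrix (Fin m) (Fin m) ℂ) *ᵥ y = x := by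
    rw [Matrix.one_mulVec, Matrix.zero_mulVec, add_zero]
  rw [oneStep, fromBlocks_mulVec,
    show (Sum.elim x y) ∘ Sum.inl = x from rfl, show (Sum.elim x y) ∘ Sum.inr = y from rfl, h1, h2]

noncomputable def partialT {m n : ℕ} (A B C : Fin n → Matrix (Fin m) (Fin m) ℂ)
    (E : ℂ) (k : ℕ) : Matrix (Fin m ⊕ Fin m) (Fin m ⊕ Fin m) ℂ :=
  ((List.ofFn fun j : Fin n => oneStep (A j) (B j) (C j) E).take k).reverse.prod

lemma partialT_zero {m n : ℕ} (A B C : Fin n → Matrix (Fin m) (Fin m) ℂ) (E : ℂ) :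
    partialT A B C E 0 = 1 := by simp [partialT]

lemma partialT_succ {m n : ℕ} (A B C : Fin n → Matrix (Fin m) (Fin m) ℂ) (E : ℂ)
    (k : ℕ) (hk : k < n) :
    partialT A B C E (k + 1)
      = oneStep (A ⟨k, hk⟩) (B ⟨k, hk⟩) (C ⟨k, hk⟩) E * partialT A B C E k := by
  have hlen : k < (List.ofFn fun j : Fin n => oneStep (A j) (B j) (C j) E).length := by
    simpa using hk
  rw [partialT, partialT, List.take_succ, List.getElem?_eq_getElem hlen]
  simp [List.getElem_ofFn]

lemma partialT_top {m n : ℕ} (A B C : Fin n → Matrix (Fin m) (Fin m) ℂ) (E : ℂ) :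
    partialT A B C E n = transferMat A B C E := by
  rw [partialT, transferMat, List.take_of_length_le (by simp)]

lemma Hmat_inner (A B C : Fin n → Matrix (Fin m) (Fin m) ℂ) (z : ℂ)
    (ψ : Fin n × Fin m → ℂ) (a b : Fin n) (i : Fin m) :
    ∑ j, Hmat A B C z (a, i) (b, j) * ψ (b, j) =
      (if a = b then (A a *ᵥ colF ψ b) i else 0)
      + (if (b : ℕ) = (a : ℕ) + 1 then (B a *ᵥ colF ψ b) i else 0)
      + (if (a : ℕ) = (b : ℕ) + 1 then (C a *ᵥ colF ψ b) i else 0)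
      + (if (a : ℕ) = 0 ∧ (b : ℕ) = n - 1 then z⁻¹ * ((C a *ᵥ colF ψ b) i) else 0)
      + (if (a : ℕ) = n - 1 ∧ (b : ℕ) = 0 then z * ((B a *ᵥ colF ψ b) i) else 0) := by
  simp only [Hmat, Matrix.add_apply, add_mul, Finset.sum_add_distrib]
  congr 1
  congr 1
  congr 1
  congr 1
  all_goals split_ifs with h <;>
    simp [mulVec, dotProduct, Finset.mul_sum, mul_assoc, colF]

lemma Hmat_mulVec_row (hn : 0 < n) (A B C : Fin n → Matrix (Fin m) (Fin m) ℂ) (z : ℂ)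
    (ψ : Fin n × Fin m → ℂ) (a : Fin n) (i : Fin m) :
    (Hmat A B C z *ᵥ ψ) (a, i) =
      (A a *ᵥ colF ψ a) i
      + (if h : (a : ℕ) + 1 < n then (B a *ᵥ colF ψ ⟨(a : ℕ) + 1, h⟩) i else 0)
      + (if h : 1 ≤ (a : ℕ) then
          (C a *ᵥ colF ψ ⟨(a : ℕ) - 1, Nat.lt_of_le_of_lt (Nat.sub_le _ _) a.isLt⟩) i else 0)
      + (if (a : ℕ) = 0 then z⁻¹ * ((C a *ᵥ colF ψ ⟨n - 1, Nat.sub_lt hn Nat.one_pos⟩) i) else 0)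
      + (if (a : ℕ) = n - 1 then z * ((B a *ᵥ colF ψ ⟨0, hn⟩) i) else 0) := by
  have expand : (Hmat A B C z *ᵥ ψ) (a, i)
      = ∑ b : Fin n, ∑ j, Hmat A B C z (a, i) (b, j) * ψ (b, j) := by
    rw [Matrix.mulVec, dotProduct]
    exact Fintype.sum_prod_type _
  rw [expand]
  simp only [Hmat_inner A B C z ψ a]
  rw [Finset.sum_add_distrib, Finset.sum_add_distrib, Finset.sum_add_distrib,
    Finset.sum_add_distrib]
  congr 1
  congr 1
  congr 1
  congr 1
  · rw [Finset.sum_ite_eq]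
    simp
  · exact sum_ite_coe _ _
  · by_cases ha : 1 ≤ (a : ℕ)
    · rw [dif_pos ha]
      have hiff : ∀ b : Fin n, ((a : ℕ) = (b : ℕ) + 1) ↔ ((b : ℕ) = (a : ℕ) - 1) := by
        intro b; omega
      simp only [hiff]
      rw [sum_ite_coe ((a : ℕ) - 1) (fun b => (C a *ᵥ colF ψ b) i)]
      rw [dif_pos (Nat.lt_of_le_of_lt (Nat.sub_le _ _) a.isLt)]
    · rw [dif_neg ha]
      exact Finset.sum_eq_zero fun b _ => if_neg (by omega)
  · by_cases ha : (a : ℕ) = 0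
    · simp only [ha, true_and]
      rw [sum_ite_coe (n - 1) (fun b => z⁻¹ * ((C a *ᵥ colF ψ b) i)),
        dif_pos (Nat.sub_lt hn Nat.one_pos), if_pos trivial]
    · simp [ha]
  · by_cases ha : (a : ℕ) = n - 1
    · simp only [ha, true_and]
      rw [sum_ite_coe 0 (fun b => z * ((B a *ᵥ colF ψ b) i)), dif_pos hn, if_pos trivial]
    · simp [ha]

section Main
variable {m n : ℕ}

lemma forward_dir (hn : 2 ≤ n) (A B C : Fin n → Matrix (Fin m) (Fin m) ℂ)
    (hB : ∀ k, IsUnit (B k).det) (E : ℂ) (z : ℂ) (hz : z ≠ 0)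
    (v : Fin m ⊕ Fin m → ℂ) (hv : v ≠ 0) (hTv : transferMat A B C E *ᵥ v = z • v) :
    ∃ ψ : Fin n × Fin m → ℂ, ψ ≠ 0 ∧ Hmat A B C z *ᵥ ψ = E • ψ := by
  set P : ℕ → Matrix (Fin m ⊕ Fin m) (Fin m ⊕ Fin m) ℂ := partialT A B C E with hP
  set φ : ℕ → Fin m → ℂ :=
    fun k => if k ≤ n then (P k *ᵥ v) ∘ Sum.inr else (P n *ᵥ v) ∘ Sum.inl with hφ
  have hφle : ∀ k, k ≤ n → φ k = (P k *ᵥ v) ∘ Sum.inr := by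
    intro k hk; simp only [hφ, if_pos hk]
  have hφtop : φ (n + 1) = (P n *ᵥ v) ∘ Sum.inl := by
    simp only [hφ, if_neg (by omega : ¬ n + 1 ≤ n)]
  have hBinv : ∀ (k : Fin n) (w : Fin m → ℂ), (B k) *ᵥ ((B k)⁻¹ *ᵥ w) = w := by
    intro k w
    rw [Matrix.mulVec_mulVec, Matrix.mul_nonsing_inv _ (hB k), Matrix.one_mulVec]
  -- F1
  have F1 : ∀ k, k ≤ n → P k *ᵥ v = Sum.elim (φ (k + 1)) (φ k) := by
    intro k hk
    funext s
    cases s with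
    | inl i =>
      show (P k *ᵥ v) (Sum.inl i) = φ (k + 1) i
      rcases eq_or_lt_of_le hk with heq | hlt
      · subst heq
        rw [hφtop]; rfl
      · rw [hφle (k + 1) hlt]
        show (P k *ᵥ v) (Sum.inl i) = (P (k+1) *ᵥ v) (Sum.inr i)
        rw [hP, partialT_succ A B C E k hlt, ← Matrix.mulVec_mulVec,
          ← Sum.elim_comp_inl_inr (partialT A B C E k *ᵥ v), oneStep_mulVec]
        rfl
    | inr i =>
      rw [hφle k hk]; rfl
  -- F2
  have F2 : ∀ (k : ℕ) (hk : k < n),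
      B ⟨k, hk⟩ *ᵥ φ (k + 2) + A ⟨k, hk⟩ *ᵥ φ (k + 1) + C ⟨k, hk⟩ *ᵥ φ k = E • φ (k + 1) := by
    intro k hk
    have h1 : P (k + 1) *ᵥ v = Sum.elim (φ (k + 2)) (φ (k + 1)) := F1 (k + 1) hk
    have h2 : P (k + 1) *ᵥ v
        = Sum.elim ((B ⟨k, hk⟩)⁻¹ *ᵥ
            (E • φ (k + 1) - A ⟨k, hk⟩ *ᵥ φ (k + 1) - C ⟨k, hk⟩ *ᵥ φ k)) (φ (k + 1)) := by
      rw [hP, partialT_succ A B C E k hk, ← Matrix.mulVec_mulVec, ← hP, F1 k hk.le,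
        oneStep_mulVec]
    have h3 : φ (k + 2)
        = (B ⟨k, hk⟩)⁻¹ *ᵥ (E • φ (k + 1) - A ⟨k, hk⟩ *ᵥ φ (k + 1) - C ⟨k, hk⟩ *ᵥ φ k) := by
      funext i
      exact congrFun (h1.symm.trans h2) (Sum.inl i)
    have h4 := congrArg (fun w => B ⟨k, hk⟩ *ᵥ w) h3
    simp only [hBinv] at h4
    rw [h4]
    abel
  -- boundary
  have hPn : P n *ᵥ v = z • v := by rw [hP, partialT_top]; exact hTv
  have hv_elim : v = Sum.elim (φ 1) (φ 0) := by
    rw [← F1 0 (by omega), hP, partialT_zero, Matrix.one_mulVec]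
  have hφ1 : φ 1 = v ∘ Sum.inl := by funext i; rw [hv_elim]; rfl
  have hφ0 : φ 0 = v ∘ Sum.inr := by funext i; rw [hv_elim]; rfl
  have hφn : φ n = z • φ 0 := by
    rw [hφle n le_rfl, hPn, hφ0]; rfl
  have hφn1 : φ (n + 1) = z • φ 1 := by
    rw [hφtop, hPn, hφ1]; rfl
  -- the eigenvector
  refine ⟨fun p => φ ((p.1 : ℕ) + 1) p.2, ?_, ?_⟩
  · intro h0
    have hall : ∀ b : Fin n, φ ((b : ℕ) + 1) = 0 := by
      intro b; funext j
      exact congrFun h0 (b, j)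
    have h1 : φ 1 = 0 := by
      have := hall ⟨0, by omega⟩; simpa using this
    have hnn : φ n = 0 := by
      have := hall ⟨n - 1, by omega⟩
      rw [show (((⟨n - 1, by omega⟩ : Fin n) : ℕ) + 1) = n from by simp; omega] at this
      exact this
    have h0' : φ 0 = 0 := by
      have := hφn.symm.trans hnn
      rcases smul_eq_zero.mp this with h | h
      · exact absurd h hz
      · exact h
    apply hv
    rw [hv_elim, h1, h0']
    simp
  · funext p
    obtain ⟨a, i⟩ := p
    have hcol : ∀ b : Fin n, colF (fun p => φ ((p.1 : ℕ) + 1) p.2) b = φ ((b : ℕ) + 1) :=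
      fun b => rfl
    rw [Hmat_mulVec_row (by omega) A B C z _ a i]
    simp only [hcol]
    have key := F2 (a : ℕ) a.isLt
    rw [show (⟨(a : ℕ), a.isLt⟩ : Fin n) = a from Fin.eta a a.isLt] at key
    have rhs : (E • fun p : Fin n × Fin m => φ ((p.1 : ℕ) + 1) p.2) (a, i)
        = (E • φ ((a : ℕ) + 1)) i := rfl
    rw [rhs]
    by_cases ha0 : (a : ℕ) = 0
    · rw [dif_pos (by omega : (a : ℕ) + 1 < n), dif_neg (by omega), if_pos ha0,
        if_neg (by omega)]
      have e1 : (((⟨n - 1, Nat.sub_lt (by omega) Nat.one_pos⟩ : Fin n) : ℕ) + 1) = n := by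
        simp; omega
      rw [e1]
      have e2 : C a *ᵥ φ n = z • (C a *ᵥ φ 0) := by
        rw [hφn, Matrix.mulVec_smul]
      rw [e2]
      have : z⁻¹ * ((z • (C a *ᵥ φ 0)) i) = (C a *ᵥ φ 0) i := by
        simp [smul_eq_mul]
        field_simp
      rw [this]
      have := congrFun key i
      simp only [Pi.add_apply] at this ⊢
      rw [ha0] at this ⊢
      linear_combination this
    · by_cases han : (a : ℕ) = n - 1
      · rw [dif_neg (by omega : ¬ ((a : ℕ) + 1 < n)), dif_pos (by omega : 1 ≤ (a : ℕ)),
          if_neg ha0, if_pos han]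
        have e3 : (((⟨(a : ℕ) - 1, Nat.lt_of_le_of_lt (Nat.sub_le _ _) a.isLt⟩ : Fin n) : ℕ) + 1)
            = (a : ℕ) := by simp; omega
        have e4 : (((⟨0, by omega⟩ : Fin n) : ℕ) + 1) = 1 := by simp
        rw [e3, e4]
        have e5 : (a : ℕ) + 2 = n + 1 := by omega
        have e6 : (a : ℕ) + 1 = n := by omega
        rw [e5, e6, hφn1] at key
        rw [e6]
        have := congrFun key i
        simp only [Pi.add_apply, Matrix.mulVec_smul, Pi.smul_apply, smul_eq_mul] at this ⊢
        linear_combination this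
      · rw [dif_pos (by omega : (a : ℕ) + 1 < n), dif_pos (by omega : 1 ≤ (a : ℕ)),
          if_neg ha0, if_neg han]
        have e3 : (((⟨(a : ℕ) - 1, Nat.lt_of_le_of_lt (Nat.sub_le _ _) a.isLt⟩ : Fin n) : ℕ) + 1)
            = (a : ℕ) := by simp; omega
        have e7 : (((⟨(a : ℕ) + 1, by omega⟩ : Fin n) : ℕ) + 1) = (a : ℕ) + 2 := by simp
        rw [e3, e7]
        have := congrFun key i
        simp only [Pi.add_apply] at this ⊢
        linear_combination this

lemma backward_dir (hn : 2 ≤ n) (A B C : Fin n → Matrix (Fin m) (Fin m) ℂ)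
    (hB : ∀ k, IsUnit (B k).det) (E : ℂ) (z : ℂ) (hz : z ≠ 0)
    (ψ : Fin n × Fin m → ℂ) (hψ : ψ ≠ 0) (hH : Hmat A B C z *ᵥ ψ = E • ψ) :
    ∃ v : Fin m ⊕ Fin m → ℂ, v ≠ 0 ∧ transferMat A B C E *ᵥ v = z • v := by
  have hn1 : 0 < n := by omega
  set c : ℕ → Fin m → ℂ := fun x => if h : x < n then colF ψ ⟨x, h⟩ else 0 with hcdef
  have hc : ∀ b : Fin n, colF ψ b = c (b : ℕ) := by
    intro b
    simp only [hcdef]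
    rw [dif_pos b.isLt, Fin.eta]
  set φ : ℕ → Fin m → ℂ := fun k =>
    if k = 0 then z⁻¹ • c (n - 1)
    else if k ≤ n then c (k - 1)
    else z • c 0 with hφdef
  have hφ0 : φ 0 = z⁻¹ • c (n - 1) := by simp only [hφdef]; simp
  have hφmid : ∀ (k : ℕ), 1 ≤ k → k ≤ n → φ k = c (k - 1) := by
    intro k h1 h2
    simp only [hφdef]; rw [if_neg (by omega), if_pos h2]
  have hφtop : φ (n + 1) = z • c 0 := by
    simp only [hφdef]; rw [if_neg (by omega), if_neg (by omega)]
  have hBinv' : ∀ (k : Fin n) (w : Fin m → ℂ), (B k)⁻¹ *ᵥ ((B k) *ᵥ w) = w := by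
    intro k w
    rw [Matrix.mulVec_mulVec, Matrix.nonsing_inv_mul _ (hB k), Matrix.one_mulVec]
  have hrow : ∀ (a : Fin n) (i : Fin m),
      (A a *ᵥ c (a : ℕ)) i
      + (if (a : ℕ) + 1 < n then (B a *ᵥ c ((a : ℕ) + 1)) i else 0)
      + (if 1 ≤ (a : ℕ) then (C a *ᵥ c ((a : ℕ) - 1)) i else 0)
      + (if (a : ℕ) = 0 then z⁻¹ * ((C a *ᵥ c (n - 1)) i) else 0)
      + (if (a : ℕ) = n - 1 then z * ((B a *ᵥ c 0) i) else 0)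
      = E * (c (a : ℕ)) i := by
    intro a i
    have base := Hmat_mulVec_row hn1 A B C z ψ a i
    rw [hH] at base
    have hEc : (E • ψ) (a, i) = E * (c (a : ℕ)) i := by
      rw [← hc a]; rfl
    rw [hEc] at base
    rw [base]
    congr 1
    · congr 1
      · congr 1
        · congr 1
          · rw [hc]
          · split_ifs with h
            · rw [hc]
            · rfl
        · split_ifs with h
          · rw [hc]
          · rfl
      · split_ifs with h
        · rw [hc]
        · rfl
    · split_ifs with h
      · rw [hc]
      · rfl
  -- the key block recursion
  have B1 : ∀ (k : ℕ) (hk : k < n),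
      B ⟨k, hk⟩ *ᵥ φ (k + 2) + A ⟨k, hk⟩ *ᵥ φ (k + 1) + C ⟨k, hk⟩ *ᵥ φ k = E • φ (k + 1) := by
    intro k hk
    funext i
    have row := hrow ⟨k, hk⟩ i
    rw [Fin.val_mk] at row
    have e1 : φ (k + 1) = c k := by
      rw [hφmid (k + 1) (by omega) (by omega)]; congr 1
    by_cases hk0 : k = 0
    · subst hk0
      rw [if_pos (by omega), if_neg (by omega), if_pos rfl, if_neg (by omega)] at row
      have e2 : φ 2 = c 1 := by rw [hφmid 2 (by omega) (by omega)]
      simp only [e1, e2, hφ0, Pi.add_apply, Pi.smul_apply, smul_eq_mul,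
        Matrix.mulVec_smul] at *
      linear_combination row
    · by_cases hkn : k = n - 1
      · rw [if_neg (by omega), if_pos (by omega), if_neg hk0, if_pos hkn] at row
        have e2 : φ (k + 2) = z • c 0 := by rw [show k + 2 = n + 1 from by omega, hφtop]
        have e3 : φ k = c (k - 1) := hφmid k (by omega) (by omega)
        simp only [e1, e2, e3, Pi.add_apply, Pi.smul_apply, smul_eq_mul,
          Matrix.mulVec_smul] at *
        linear_combination row
      · rw [if_pos (by omega), if_pos (by omega), if_neg hk0, if_neg hkn] at row
        have e2 : φ (k + 2) = c (k + 1) := by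
          rw [hφmid (k + 2) (by omega) (by omega)]; congr 1
        have e3 : φ k = c (k - 1) := hφmid k (by omega) (by omega)
        simp only [e1, e2, e3, Pi.add_apply, Pi.smul_apply, smul_eq_mul] at *
        linear_combination row
  -- build the transfer eigenvector
  set v : Fin m ⊕ Fin m → ℂ := Sum.elim (φ 1) (φ 0) with hvdef
  have B2 : ∀ k, k ≤ n → partialT A B C E k *ᵥ v = Sum.elim (φ (k + 1)) (φ k) := by
    intro k
    induction k with
    | zero => intro _; rw [partialT_zero, Matrix.one_mulVec]
    | succ k ih =>
      intro hk1
      have hk : k < n := by omega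
      rw [partialT_succ A B C E k hk, ← Matrix.mulVec_mulVec, ih (by omega), oneStep_mulVec]
      have hb : E • φ (k + 1) - A ⟨k, hk⟩ *ᵥ φ (k + 1) - C ⟨k, hk⟩ *ᵥ φ k
          = B ⟨k, hk⟩ *ᵥ φ (k + 2) := by
        rw [← B1 k hk]; abel
      rw [hb, hBinv' ⟨k, hk⟩]
  have hTv : transferMat A B C E *ᵥ v = z • v := by
    rw [← partialT_top, B2 n le_rfl]
    funext s
    cases s with
    | inl i =>
      show φ (n + 1) i = z * φ 1 i
      rw [hφtop, hφmid 1 le_rfl (by omega)]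
      rfl
    | inr i =>
      show φ n i = z * φ 0 i
      rw [hφ0, hφmid n (by omega) le_rfl]
      simp [smul_smul, mul_inv_cancel₀ hz]
      ring_nf
      rw [mul_comm z z⁻¹, inv_mul_cancel₀ hz, one_mul]
  refine ⟨v, ?_, hTv⟩
  intro h0
  have hall : ∀ k, k ≤ n → φ k = 0 := by
    intro k hk
    have := B2 k hk
    rw [h0, Matrix.mulVec_zero] at this
    funext j
    exact (congrFun this.symm (Sum.inr j))
  apply hψ
  funext p
  obtain ⟨b, j⟩ := p
  have h1 : ψ (b, j) = c (b : ℕ) j := by rw [← hc b]; rfl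
  have h2 : c (b : ℕ) = φ ((b : ℕ) + 1) := by
    rw [hφmid ((b : ℕ) + 1) (by omega) (by omega)]; congr 1
  rw [h1, h2, hall ((b : ℕ) + 1) (by omega)]
  rfl

end Main

/-- Corollary of duality: for `z ≠ 0`, `z` is an eigenvalue of `T(E)` iff `E` is an
eigenvalue of `H(z)`. -/
theorem stmt_11 {m n : ℕ} (hn : 2 ≤ n) (A B C : Fin n → Matrix (Fin m) (Fin m) ℂ)
    (hB : ∀ k, IsUnit (B k).det) (hC : ∀ k, IsUnit (C k).det)
    (E : ℂ) (z : ℂ) (hz : z ≠ 0) :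
    z ∈ spectrum ℂ (transferMat A B C E) ↔ E ∈ spectrum ℂ (Hmat A B C z) := by
  rw [mem_spectrum_iff_exists, mem_spectrum_iff_exists]
  constructor
  · rintro ⟨v, hv, hTv⟩
    exact forward_dir hn A B C hB E z hz v hv hTv
  · rintro ⟨ψ, hψ, hH⟩
    exact backward_dir hn A B C hB E z hz ψ hψ hH
end

section
/- (Corner-block resolvent reduction.) Let h be H(zⁿ) with its two corner blocks removed (so h is z-independent block tridiagonal), g = (h − E)⁻¹ with m×m blocks g_{ab}, and G^B = (H^B(z) − E)⁻¹. Assuming all indicated inverses exist, trace( z B_n G^B_{1n} − z⁻¹ C_1 G^B_{n1} ) = trace of the inverse of the 2m×2m block matrix [[−zⁿ B_n g_{1n} − I_m, −zⁿ B_n g_{11}], [z⁻ⁿ C_1 g_{nn}, z⁻ⁿ C_1 g_{n1} + I_m]]. -/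
open Matrix

/-- The matrix `h`: `H(z)` with its two corner blocks removed, i.e. the `z`-independent
block tridiagonal matrix with diagonal blocks `A_k`, superdiagonal `B_k`,
subdiagonal `C_k`. -/
noncomputable def hmat {n m : ℕ} (A B C : Fin n → Matrix (Fin m) (Fin m) ℂ) :
    Matrix (Fin n × Fin m) (Fin n × Fin m) ℂ := fun p q =>
  ((if p.1 = q.1 then A p.1 else 0)
    + (if (q.1 : ℕ) = (p.1 : ℕ) + 1 then B p.1 else 0)
    + (if (p.1 : ℕ) = (q.1 : ℕ) + 1 then C p.1 else 0)) p.2 q.2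

lemma conj_eq {n m : ℕ} (hn : 2 ≤ n) (A B C : Fin n → Matrix (Fin m) (Fin m) ℂ)
    (z : ℂ) (hz : z ≠ 0) :
    HBmat A B C z =
      (diagonal (fun p : Fin n × Fin m => (z ^ ((p.1 : ℕ) + 1))⁻¹)) *
        Hmat A B C (z ^ n) * Smat n m z := by
  ext ⟨a, i⟩ ⟨b, j⟩
  rw [Smat, Matrix.mul_diagonal, Matrix.diagonal_mul]
  have hpz : ∀ k : ℕ, z ^ k ≠ 0 := fun k => pow_ne_zero k hz
  simp only [HBmat, Hmat, Matrix.add_apply, apply_ite (fun M : Matrix (Fin m) (Fin m) ℂ => M i j),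
    Matrix.zero_apply, Matrix.smul_apply, smul_eq_mul]
  rw [mul_add, mul_add, mul_add, mul_add, add_mul, add_mul, add_mul, add_mul]
  congr 1
  congr 1
  congr 1
  congr 1
  · split_ifs with h
    · rw [h]; field_simp
    · ring
  · split_ifs with h
    · rw [h]
      field_simp
      ring
    · ring
  · split_ifs with h
    · rw [h]
      field_simp
      ring
    · ring
  · split_ifs with h
    · obtain ⟨h1, h2⟩ := h
      rw [h1, h2]
      have : n - 1 + 1 = n := by omega
      rw [this]
      field_simp
      ring
    · ring
  · split_ifs with h
    · obtain ⟨h1, h2⟩ := h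
      rw [h1, h2]
      have : n - 1 + 1 = n := by omega
      rw [this]
      field_simp
      ring
    · ring
lemma SinvS {n m : ℕ} (z : ℂ) (hz : z ≠ 0) :
    (diagonal (fun p : Fin n × Fin m => (z ^ ((p.1 : ℕ) + 1))⁻¹)) * Smat n m z = 1 := by
  rw [Smat, diagonal_mul_diagonal]
  have : (fun p : Fin n × Fin m => (z ^ ((p.1 : ℕ) + 1))⁻¹ * z ^ ((p.1 : ℕ) + 1))
      = fun _ => (1 : ℂ) := funext fun p => inv_mul_cancel₀ (pow_ne_zero _ hz)
  rw [this, diagonal_one]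

lemma SSinv {n m : ℕ} (z : ℂ) (hz : z ≠ 0) :
    Smat n m z * (diagonal (fun p : Fin n × Fin m => (z ^ ((p.1 : ℕ) + 1))⁻¹)) = 1 := by
  rw [Smat, diagonal_mul_diagonal]
  have : (fun p : Fin n × Fin m => z ^ ((p.1 : ℕ) + 1) * (z ^ ((p.1 : ℕ) + 1))⁻¹)
      = fun _ => (1 : ℂ) := funext fun p => mul_inv_cancel₀ (pow_ne_zero _ hz)
  rw [this, diagonal_one]

lemma conj_eq' {n m : ℕ} (hn : 2 ≤ n) (A B C : Fin n → Matrix (Fin m) (Fin m) ℂ)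
    (E z : ℂ) (hz : z ≠ 0) :
    HBmat A B C z - E • 1 =
      (diagonal (fun p : Fin n × Fin m => (z ^ ((p.1 : ℕ) + 1))⁻¹)) *
        (Hmat A B C (z ^ n) - E • 1) * Smat n m z := by
  rw [conj_eq hn A B C z hz, Matrix.mul_sub, Matrix.sub_mul]
  congr 1
  rw [Matrix.mul_smul, Matrix.mul_one, Matrix.smul_mul, SinvS z hz]

lemma detH_isUnit {n m : ℕ} (hn : 2 ≤ n) (A B C : Fin n → Matrix (Fin m) (Fin m) ℂ)
    (E z : ℂ) (hz : z ≠ 0) (hGB : IsUnit (HBmat A B C z - E • 1).det) :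
    IsUnit (Hmat A B C (z ^ n) - E • 1).det := by
  rw [conj_eq' hn A B C E z hz, det_mul, det_mul] at hGB
  exact (IsUnit.mul_iff.mp ((IsUnit.mul_iff.mp hGB).1)).2

lemma GB_eq {n m : ℕ} (hn : 2 ≤ n) (A B C : Fin n → Matrix (Fin m) (Fin m) ℂ)
    (E z : ℂ) (hz : z ≠ 0) (hGB : IsUnit (HBmat A B C z - E • 1).det) :
    (HBmat A B C z - E • 1)⁻¹ =
      (diagonal (fun p : Fin n × Fin m => (z ^ ((p.1 : ℕ) + 1))⁻¹)) *
        (Hmat A B C (z ^ n) - E • 1)⁻¹ * Smat n m z := by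
  set Si := (diagonal (fun p : Fin n × Fin m => (z ^ ((p.1 : ℕ) + 1))⁻¹)) with hSi
  set S := Smat n m z with hS
  set H := Hmat A B C (z ^ n) - E • 1 with hH
  have hdet : IsUnit H.det := detH_isUnit hn A B C E z hz hGB
  have hSiS : Si * S = 1 := SinvS z hz
  have hSSi : S * Si = 1 := SSinv z hz
  apply Matrix.inv_eq_left_inv
  rw [conj_eq' hn A B C E z hz]
  calc Si * H⁻¹ * S * (Si * H * S)
      = Si * (H⁻¹ * ((S * Si) * (H * S))) := by
        simp only [Matrix.mul_assoc]
    _ = 1 := by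
        rw [hSSi, Matrix.one_mul, ← Matrix.mul_assoc H⁻¹ H S,
          Matrix.nonsing_inv_mul H hdet, Matrix.one_mul, hSiS]

lemma blockOf_conj {n m : ℕ} (z : ℂ) (G : Matrix (Fin n × Fin m) (Fin n × Fin m) ℂ)
    (a b : Fin n) :
    blockOf ((diagonal (fun p : Fin n × Fin m => (z ^ ((p.1 : ℕ) + 1))⁻¹)) * G * Smat n m z) a b
      = ((z ^ ((a : ℕ) + 1))⁻¹ * z ^ ((b : ℕ) + 1)) • blockOf G a b := by
  ext i j
  simp [blockOf, Smat, Matrix.mul_diagonal, Matrix.diagonal_mul, Matrix.smul_apply, smul_eq_mul]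
  ring
noncomputable def Pm {n m : ℕ} (i0 iN : Fin n) : Matrix (Fin n × Fin m) (Fin m ⊕ Fin m) ℂ :=
  fun p s => Sum.elim (fun j => if p = (i0, j) then 1 else 0)
    (fun j => if p = (iN, j) then 1 else 0) s

noncomputable def Qm {n m : ℕ} (i0 iN : Fin n) (X Y : Matrix (Fin m) (Fin m) ℂ) :
    Matrix (Fin m ⊕ Fin m) (Fin n × Fin m) ℂ :=
  fun s q => Sum.elim (fun i => if q.1 = iN then X i q.2 else 0)
    (fun i => if q.1 = i0 then Y i q.2 else 0) s

lemma QMP {n m : ℕ} (i0 iN : Fin n) (X Y : Matrix (Fin m) (Fin m) ℂ)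
    (M : Matrix (Fin n × Fin m) (Fin n × Fin m) ℂ) :
    Qm i0 iN X Y * M * Pm (m := m) i0 iN =
      fromBlocks (X * blockOf M iN i0) (X * blockOf M iN iN)
        (Y * blockOf M i0 i0) (Y * blockOf M i0 iN) := by
  apply Matrix.ext; intro s t
  cases s <;> cases t <;>
    simp [Matrix.mul_apply, Pm, Qm, blockOf, fromBlocks, Fintype.sum_prod_type,
      Prod.ext_iff, ite_and, mul_ite, ite_mul, Finset.sum_ite_eq, Finset.sum_ite_eq']
lemma PQ_eq {n m : ℕ} (hn : 2 ≤ n) (A B C : Fin n → Matrix (Fin m) (Fin m) ℂ)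
    (w : ℂ) :
    Hmat A B C w - hmat A B C =
      Pm (m := m) (⟨0, Nat.zero_lt_of_lt hn⟩ : Fin n) (⟨n - 1, Nat.sub_one_lt_of_lt hn⟩ : Fin n) *
        Qm (⟨0, Nat.zero_lt_of_lt hn⟩ : Fin n) (⟨n - 1, Nat.sub_one_lt_of_lt hn⟩ : Fin n)
          (w⁻¹ • C (⟨0, Nat.zero_lt_of_lt hn⟩ : Fin n)) (w • B (⟨n - 1, Nat.sub_one_lt_of_lt hn⟩ : Fin n)) := by
  apply Matrix.ext; rintro ⟨a, i⟩ ⟨b, j⟩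
  simp only [Matrix.mul_apply, Fintype.sum_sum_type, Pm, Qm, Sum.elim_inl, Sum.elim_inr]
  simp only [Prod.mk.injEq, ite_and, ite_mul, one_mul, zero_mul, Finset.sum_ite_eq',
    Finset.mem_univ, if_true]
  simp only [Matrix.sub_apply, Hmat, hmat, Matrix.add_apply,
    apply_ite (fun M : Matrix (Fin m) (Fin m) ℂ => M i j), Matrix.zero_apply,
    Matrix.smul_apply, smul_eq_mul]
  have ha0 : ((a : ℕ) = 0) ↔ (a = (⟨0, Nat.zero_lt_of_lt hn⟩ : Fin n)) :=
    ⟨fun h => Fin.ext h, fun h => congrArg Fin.val h⟩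
  have haN : ((a : ℕ) = n - 1) ↔ (a = (⟨n - 1, Nat.sub_one_lt_of_lt hn⟩ : Fin n)) :=
    ⟨fun h => Fin.ext h, fun h => congrArg Fin.val h⟩
  have hb0 : ((b : ℕ) = 0) ↔ (b = (⟨0, Nat.zero_lt_of_lt hn⟩ : Fin n)) :=
    ⟨fun h => Fin.ext h, fun h => congrArg Fin.val h⟩
  have hbN : ((b : ℕ) = n - 1) ↔ (b = (⟨n - 1, Nat.sub_one_lt_of_lt hn⟩ : Fin n)) :=
    ⟨fun h => Fin.ext h, fun h => congrArg Fin.val h⟩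
  simp only [ha0, haN, hb0, hbN]
  ring_nf
  congr 1
  · by_cases h1 : a = (⟨0, Nat.zero_lt_of_lt hn⟩ : Fin n) <;>
      by_cases h2 : b = (⟨n - 1, Nat.sub_one_lt_of_lt hn⟩ : Fin n) <;> simp [h1, h2]
  · by_cases h1 : a = (⟨n - 1, Nat.sub_one_lt_of_lt hn⟩ : Fin n) <;>
      by_cases h2 : b = (⟨0, Nat.zero_lt_of_lt hn⟩ : Fin n) <;> simp [h1, h2]
lemma core_resolvent {ι κ : Type*} [Fintype ι] [Fintype κ] [DecidableEq ι] [DecidableEq κ]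
    (h H : Matrix ι ι ℂ) (P : Matrix ι κ ℂ) (Q : Matrix κ ι ℂ)
    (hHh : H = h + P * Q)
    (hgu : IsUnit h.det) (hHu : IsUnit H.det)
    (hKu : IsUnit (1 + Q * h⁻¹ * P).det) :
    Q * H⁻¹ * P = 1 - (1 + Q * h⁻¹ * P)⁻¹ := by
  set g := h⁻¹ with hg
  set G := H⁻¹ with hG
  set K := Q * g * P with hK
  have e1 : h * G + P * (Q * G) = 1 := by
    have : (h + P * Q) * G = 1 := by rw [← hHh]; exact Matrix.mul_nonsing_inv H hHu
    rw [Matrix.add_mul, Matrix.mul_assoc] at this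
    exact this
  have e2 : G + g * (P * (Q * G)) = g := by
    have := congrArg (fun M => g * M) e1
    simp only [Matrix.mul_add, Matrix.mul_one] at this
    rw [← Matrix.mul_assoc, hg, Matrix.nonsing_inv_mul h hgu, Matrix.one_mul] at this
    exact this
  have e3 : (1 + K) * (Q * G) = Q * g := by
    have := congrArg (fun M => Q * M) e2
    simp only [Matrix.mul_add] at this
    rw [Matrix.add_mul, Matrix.one_mul, hK]
    calc Q * G + Q * g * P * (Q * G)
        = Q * G + Q * (g * (P * (Q * G))) := by simp only [Matrix.mul_assoc]
      _ = Q * g := this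
  have e4 : Q * G * P = (1 + K)⁻¹ * K := by
    have := congrArg (fun M => (1 + K)⁻¹ * M) e3
    rw [← Matrix.mul_assoc, Matrix.nonsing_inv_mul _ hKu, Matrix.one_mul] at this
    rw [this, hK]
    simp only [Matrix.mul_assoc]
  have e5 : (1 + K)⁻¹ * K = 1 - (1 + K)⁻¹ := by
    have := Matrix.nonsing_inv_mul _ hKu
    rw [Matrix.mul_add, Matrix.mul_one] at this
    linear_combination (norm := noncomm_ring) this
  rw [e4, e5]
lemma trace_fromBlocks' {m : ℕ} (A B C D : Matrix (Fin m) (Fin m) ℂ) :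
    (fromBlocks A B C D).trace = A.trace + D.trace := by
  simp [Matrix.trace, Matrix.diag, Fintype.sum_sum_type, fromBlocks]


/-- Corner-block resolvent reduction: with `g = (h − E)⁻¹` and
`G^B = (H^B(z) − E)⁻¹`,
`tr(z B_n G^B_{1n} − z⁻¹ C_1 G^B_{n1})` equals the trace of the inverse of the
`2m × 2m` block matrix
`[[−zⁿ B_n g_{1n} − I, −zⁿ B_n g_{11}], [z⁻ⁿ C_1 g_{nn}, z⁻ⁿ C_1 g_{n1} + I]]`. -/
theorem stmt_19 {n m : ℕ} (hn : 2 ≤ n) (A B C : Fin n → Matrix (Fin m) (Fin m) ℂ)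
    (E z : ℂ) (hz : z ≠ 0)
    (hg : IsUnit (hmat A B C - E • 1).det)
    (hGB : IsUnit (HBmat A B C z - E • 1).det)
    (hM : IsUnit
      (fromBlocks
        (-(z ^ n) • (B (⟨n - 1, by omega⟩ : Fin n) *
            blockOf (hmat A B C - E • 1)⁻¹ (⟨0, by omega⟩ : Fin n)
              (⟨n - 1, by omega⟩ : Fin n)) - 1)
        (-(z ^ n) • (B (⟨n - 1, by omega⟩ : Fin n) *
            blockOf (hmat A B C - E • 1)⁻¹ (⟨0, by omega⟩ : Fin n)
              (⟨0, by omega⟩ : Fin n)))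
        ((z ^ n)⁻¹ • (C (⟨0, by omega⟩ : Fin n) *
            blockOf (hmat A B C - E • 1)⁻¹ (⟨n - 1, by omega⟩ : Fin n)
              (⟨n - 1, by omega⟩ : Fin n)))
        ((z ^ n)⁻¹ • (C (⟨0, by omega⟩ : Fin n) *
            blockOf (hmat A B C - E • 1)⁻¹ (⟨n - 1, by omega⟩ : Fin n)
              (⟨0, by omega⟩ : Fin n)) + 1)).det) :
    Matrix.trace
        (z • (B (⟨n - 1, by omega⟩ : Fin n) *
            blockOf (HBmat A B C z - E • 1)⁻¹ (⟨0, by omega⟩ : Fin n)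
              (⟨n - 1, by omega⟩ : Fin n)) -
          z⁻¹ • (C (⟨0, by omega⟩ : Fin n) *
            blockOf (HBmat A B C z - E • 1)⁻¹ (⟨n - 1, by omega⟩ : Fin n)
              (⟨0, by omega⟩ : Fin n))) =
      Matrix.trace
        (fromBlocks
          (-(z ^ n) • (B (⟨n - 1, by omega⟩ : Fin n) *
              blockOf (hmat A B C - E • 1)⁻¹ (⟨0, by omega⟩ : Fin n)
                (⟨n - 1, by omega⟩ : Fin n)) - 1)
          (-(z ^ n) • (B (⟨n - 1, by omega⟩ : Fin n) *
              blockOf (hmat A B C - E • 1)⁻¹ (⟨0, by omega⟩ : Fin n)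
                (⟨0, by omega⟩ : Fin n)))
          ((z ^ n)⁻¹ • (C (⟨0, by omega⟩ : Fin n) *
              blockOf (hmat A B C - E • 1)⁻¹ (⟨n - 1, by omega⟩ : Fin n)
                (⟨n - 1, by omega⟩ : Fin n)))
          ((z ^ n)⁻¹ • (C (⟨0, by omega⟩ : Fin n) *
              blockOf (hmat A B C - E • 1)⁻¹ (⟨n - 1, by omega⟩ : Fin n)
                (⟨0, by omega⟩ : Fin n)) + 1))⁻¹ := by
  
  set i0 : Fin n := ⟨0, by omega⟩ with hi0def
  set iN : Fin n := ⟨n - 1, by omega⟩ with hiNdef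
  set w : ℂ := z ^ n with hw
  have hwz : w ≠ 0 := pow_ne_zero n hz
  set hh : Matrix (Fin n × Fin m) (Fin n × Fin m) ℂ := hmat A B C - E • 1 with hhdef
  set Hm : Matrix (Fin n × Fin m) (Fin n × Fin m) ℂ := Hmat A B C w - E • 1 with hHmdef
  have hdetH : IsUnit Hm.det := detH_isUnit hn A B C E z hz hGB
  set g : Matrix (Fin n × Fin m) (Fin n × Fin m) ℂ := hh⁻¹ with hgdef
  set G : Matrix (Fin n × Fin m) (Fin n × Fin m) ℂ := Hm⁻¹ with hGdef
  set X : Matrix (Fin m) (Fin m) ℂ := w⁻¹ • C i0 with hXdef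
  set Y : Matrix (Fin m) (Fin m) ℂ := w • B iN with hYdef
  set P : Matrix (Fin n × Fin m) (Fin m ⊕ Fin m) ℂ := Pm i0 iN with hPdef
  set Q : Matrix (Fin m ⊕ Fin m) (Fin n × Fin m) ℂ := Qm i0 iN X Y with hQdef
  have hHh : Hm = hh + P * Q := by
    have h1 : Hmat A B C w - hmat A B C = Pm (m := m) i0 iN * Qm i0 iN (w⁻¹ • C i0) (w • B iN) :=
      PQ_eq hn A B C w
    rw [hHmdef, hhdef, hPdef, hQdef, hXdef, hYdef]
    rw [← h1]
    abel
  set K : Matrix (Fin m ⊕ Fin m) (Fin m ⊕ Fin m) ℂ := Q * g * P with hKdef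
  have hKb : K = fromBlocks (X * blockOf g iN i0) (X * blockOf g iN iN)
      (Y * blockOf g i0 i0) (Y * blockOf g i0 iN) := QMP i0 iN X Y g
  set Sg : Matrix (Fin m ⊕ Fin m) (Fin m ⊕ Fin m) ℂ := fromBlocks 0 1 1 0 with hSgdef
  set Jm : Matrix (Fin m ⊕ Fin m) (Fin m ⊕ Fin m) ℂ := fromBlocks 1 0 0 (-1) with hJmdef
  have hSg2 : Sg * Sg = 1 := by
    rw [hSgdef, Matrix.fromBlocks_multiply]
    simp [← Matrix.fromBlocks_one]
  have hJ2 : Jm * Jm = 1 := by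
    rw [hJmdef, Matrix.fromBlocks_multiply]
    simp [← Matrix.fromBlocks_one]
  set Ms : Matrix (Fin m ⊕ Fin m) (Fin m ⊕ Fin m) ℂ :=
    fromBlocks (-(z ^ n) • (B iN * blockOf g i0 iN) - 1) (-(z ^ n) • (B iN * blockOf g i0 i0))
      ((z ^ n)⁻¹ • (C i0 * blockOf g iN iN)) ((z ^ n)⁻¹ • (C i0 * blockOf g iN i0) + 1)
    with hMsdef
  have e11 : -(z ^ n) • (B iN * blockOf g i0 iN) - 1 = -(1 + Y * blockOf g i0 iN) := by
    rw [hYdef, ← hw, Matrix.smul_mul, neg_smul]; abel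
  have e12 : -(z ^ n) • (B iN * blockOf g i0 i0) = -(Y * blockOf g i0 i0) := by
    rw [hYdef, ← hw, Matrix.smul_mul, neg_smul]
  have e21 : (z ^ n)⁻¹ • (C i0 * blockOf g iN iN) = X * blockOf g iN iN := by
    rw [hXdef, ← hw, Matrix.smul_mul]
  have e22 : (z ^ n)⁻¹ • (C i0 * blockOf g iN i0) + 1 = 1 + X * blockOf g iN i0 := by
    rw [hXdef, ← hw, Matrix.smul_mul]; abel
  have hMfact : Ms = Sg * (Jm * ((1 + K) * Sg)) := by
    rw [hMsdef, hKb, hSgdef, hJmdef, ← Matrix.fromBlocks_one, Matrix.fromBlocks_add,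
      Matrix.fromBlocks_multiply, Matrix.fromBlocks_multiply, Matrix.fromBlocks_multiply]
    simp only [Matrix.mul_zero, Matrix.zero_mul, Matrix.mul_one, Matrix.one_mul,
      Matrix.neg_mul, Matrix.mul_neg, zero_add, add_zero, neg_zero]
    rw [e11, e12, e21, e22]
  have hKu : IsUnit (1 + K).det := by
    have hdM : Ms.det = Sg.det * (Jm.det * ((1 + K).det * Sg.det)) := by
      rw [hMfact, det_mul, det_mul, det_mul]
    rw [hdM] at hM
    exact (IsUnit.mul_iff.mp (IsUnit.mul_iff.mp (IsUnit.mul_iff.mp hM).2).2).1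
  have hQGP : Q * G * P = 1 - (1 + K)⁻¹ := by
    rw [hGdef, hKdef, hgdef]
    exact core_resolvent hh Hm P Q hHh hg hdetH (by rw [← hgdef, ← hKdef]; exact hKu)
  have hQGPb : Q * G * P = fromBlocks (X * blockOf G iN i0) (X * blockOf G iN iN)
      (Y * blockOf G i0 i0) (Y * blockOf G i0 iN) := QMP i0 iN X Y G
  have hW : (1 + K)⁻¹ = fromBlocks (1 - X * blockOf G iN i0) (-(X * blockOf G iN iN))
      (-(Y * blockOf G i0 i0)) (1 - Y * blockOf G i0 iN) := by
    have h2 : (1 + K)⁻¹ = 1 - Q * G * P := by rw [hQGP]; abel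
    rw [h2, hQGPb, ← Matrix.fromBlocks_one, sub_eq_add_neg, Matrix.fromBlocks_neg,
      Matrix.fromBlocks_add]
    simp only [sub_eq_add_neg, zero_add]
  have hMinv : Ms⁻¹ = Sg * ((1 + K)⁻¹ * (Jm * Sg)) := by
    apply Matrix.inv_eq_right_inv
    rw [hMfact]
    calc Sg * (Jm * ((1 + K) * Sg)) * (Sg * ((1 + K)⁻¹ * (Jm * Sg)))
        = Sg * (Jm * ((1 + K) * ((Sg * Sg) * ((1 + K)⁻¹ * (Jm * Sg))))) := by
          simp only [Matrix.mul_assoc]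
      _ = Sg * (Jm * (((1 + K) * (1 + K)⁻¹) * (Jm * Sg))) := by
          rw [hSg2, Matrix.one_mul, Matrix.mul_assoc]
      _ = Sg * ((Jm * Jm) * Sg) := by
          rw [Matrix.mul_nonsing_inv _ hKu, Matrix.one_mul, Matrix.mul_assoc]
      _ = 1 := by rw [hJ2, Matrix.one_mul, hSg2]
  have htrM : Ms⁻¹.trace = ((1 + K)⁻¹ * Jm).trace := by
    rw [hMinv, Matrix.trace_mul_comm]
    rw [Matrix.mul_assoc, Matrix.mul_assoc, hSg2, Matrix.mul_one]
  have htrM2 : Ms⁻¹.trace = (Y * blockOf G i0 iN).trace - (X * blockOf G iN i0).trace := by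
    rw [htrM, hW, hJmdef, Matrix.fromBlocks_multiply]
    rw [trace_fromBlocks']
    simp [Matrix.trace_sub, Matrix.trace_neg]
    try ring
  -- left-hand side
  have hGBinv := GB_eq hn A B C E z hz hGB
  have hb1 : blockOf (HBmat A B C z - E • 1)⁻¹ i0 iN
      = ((z ^ ((i0 : ℕ) + 1))⁻¹ * z ^ ((iN : ℕ) + 1)) • blockOf Hm⁻¹ i0 iN := by
    rw [hGBinv, ← hw, ← hHmdef]; exact blockOf_conj z Hm⁻¹ i0 iN
  have hb2 : blockOf (HBmat A B C z - E • 1)⁻¹ iN i0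
      = ((z ^ ((iN : ℕ) + 1))⁻¹ * z ^ ((i0 : ℕ) + 1)) • blockOf Hm⁻¹ iN i0 := by
    rw [hGBinv, ← hw, ← hHmdef]; exact blockOf_conj z Hm⁻¹ iN i0
  have hs1 : z * ((z ^ ((i0 : ℕ) + 1))⁻¹ * z ^ ((iN : ℕ) + 1)) = w := by
    rw [hi0def, hiNdef, hw]
    show z * ((z ^ (0 + 1))⁻¹ * z ^ (n - 1 + 1)) = z ^ n
    rw [show n - 1 + 1 = n by omega]
    field_simp
    ring
  have hs2 : z⁻¹ * ((z ^ ((iN : ℕ) + 1))⁻¹ * z ^ ((i0 : ℕ) + 1)) = w⁻¹ := by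
    rw [hi0def, hiNdef, hw]
    show z⁻¹ * ((z ^ (n - 1 + 1))⁻¹ * z ^ (0 + 1)) = (z ^ n)⁻¹
    rw [show n - 1 + 1 = n by omega]
    field_simp
    try ring
  calc Matrix.trace (z • (B iN * blockOf (HBmat A B C z - E • 1)⁻¹ i0 iN) -
          z⁻¹ • (C i0 * blockOf (HBmat A B C z - E • 1)⁻¹ iN i0))
      = (Y * blockOf G i0 iN).trace - (X * blockOf G iN i0).trace := by
        rw [hb1, hb2, mul_smul_comm, mul_smul_comm, smul_smul, smul_smul, hs1, hs2,
          Matrix.trace_sub, hYdef, hXdef, Matrix.smul_mul, Matrix.smul_mul, hGdef]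
    _ = Ms⁻¹.trace := htrM2.symm
end
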